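/- Let (X,d) be a metric space of finite diameter whose covering dimension is κ < ∞. Then the log-covering dimension of the space of probability measures on X equipped with the Wasserstein-1 metric is at most κ: LCD(P_X, W₁) ≤ κ. -/

import Mathlib

open MeasureTheory Filter

/-- The covering number `N_δ(Y)`: the minimal number of sets of `ρ`-diameter at most
`δ` needed to cover `Y` (`⊤` if no finite cover exists). -/
noncomputable def coveringNumber {α : Type*} (ρ : α → α → ℝ) (Y : Set α) (δ : ℝ) : ℕ∞ :=
  sInf {n : ℕ∞ | ∃ C : Finset (Set α), n = C.card ∧
    (∀ s ∈ C, ∀ x ∈ s, ∀ y ∈ s, ρ x y ≤ δ) ∧ Y ⊆ ⋃ s ∈ C, s}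

/-- The covering dimension `Cov(Y) = limsup_{δ→0⁺} log N_δ(Y) / log(1/δ)`. -/
noncomputable def covDim {α : Type*} (ρ : α → α → ℝ) (Y : Set α) : EReal :=
  limsup (fun δ : ℝ =>
      if coveringNumber ρ Y δ = ⊤ then (⊤ : EReal)
      else ((Real.log (((coveringNumber ρ Y δ).toNat : ℝ)) / Real.log (1 / δ) : ℝ) : EReal))
    (nhdsWithin 0 (Set.Ioi 0))

/-- The log-covering dimension `LCD(Y) = limsup_{δ→0⁺} log log N_δ(Y) / log(1/δ)`. -/
noncomputable def logCovDim {α : Type*} (ρ : α → α → ℝ) (Y : Set α) : EReal :=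
  limsup (fun δ : ℝ =>
      if coveringNumber ρ Y δ = ⊤ then (⊤ : EReal)
      else ((Real.log (Real.log (((coveringNumber ρ Y δ).toNat : ℝ))) / Real.log (1 / δ) : ℝ) : EReal))
    (nhdsWithin 0 (Set.Ioi 0))

/-- The Wasserstein-1 (earthmover) distance between two measures on a metric space. -/
noncomputable def wasserstein1 {X : Type*} [MetricSpace X] [MeasurableSpace X]
    (μ ν : Measure X) : ℝ :=
  sInf {c : ℝ | ∃ π : Measure (X × X), IsProbabilityMeasure π ∧
    π.map Prod.fst = μ ∧ π.map Prod.snd = ν ∧ c = ∫ p, dist p.1 p.2 ∂π}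

open scoped ENNReal

lemma aux_div_mul_le (x y : ℝ≥0∞) : x / y * y ≤ x := by
  rcases eq_or_ne y 0 with h | h
  · simp [h]
  rcases eq_or_ne y ⊤ with h' | h'
  · simp [h', ENNReal.div_top]
  · rw [ENNReal.div_mul_cancel h h']

lemma aux_coeff {x p q : ℝ≥0∞} (hx : x ≤ q) (hq : q ≠ ⊤) : x / (p * q) * q = x / p := by
  rcases eq_or_ne q 0 with h | h
  · have : x = 0 := le_antisymm (h ▸ hx) (zero_le)
    simp [this]
  · rw [div_eq_mul_inv, ENNReal.mul_inv (Or.inr hq) (Or.inr h), ← mul_assoc, mul_assoc _ _ q,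
      ENNReal.inv_mul_cancel h hq, mul_one, div_eq_mul_inv]

lemma map_finsetSum_aux {X Y : Type*} [MeasurableSpace X] [MeasurableSpace Y] {f : X → Y}
    (hf : Measurable f) {ι : Type*} (t : Finset ι) (μ : ι → Measure X) :
    (∑ i ∈ t, μ i).map f = ∑ i ∈ t, (μ i).map f := by
  classical
  induction t using Finset.induction_on with
  | empty => simp
  | insert _ _ h ih => rw [Finset.sum_insert h, Finset.sum_insert h, Measure.map_add _ _ hf, ih]

lemma w1_le_of_cells {X : Type*} [MetricSpace X] [MeasurableSpace X] [BorelSpace X]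
    [SecondCountableTopology X]
    {N : ℕ} {B : Fin N → Set X} (hmeas : ∀ i, MeasurableSet (B i))
    (hdisj : Pairwise (Function.onFun Disjoint B))
    (hcover : (⋃ i, B i) = Set.univ)
    {d : ℝ} (hd : 0 ≤ d) (hdiam : ∀ i, ∀ x ∈ B i, ∀ y ∈ B i, dist x y ≤ d)
    {D : ℝ} (hD : 0 ≤ D) (hDbd : ∀ x y : X, dist x y ≤ D)
    (μ μ' : Measure X) [hPμ : IsProbabilityMeasure μ] [hPμ' : IsProbabilityMeasure μ']
    {η : ℝ} (hη : 0 ≤ η)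
    (hclose : ∀ i, |(μ (B i)).toReal - (μ' (B i)).toReal| ≤ η) :
    wasserstein1 μ μ' ≤ d + N * η * D := by
  classical
  set a : Fin N → ℝ≥0∞ := fun i => μ (B i) with ha
  set b : Fin N → ℝ≥0∞ := fun i => μ' (B i) with hb
  set m : Fin N → ℝ≥0∞ := fun i => min (a i) (b i) with hm
  set s : ℝ≥0∞ := ∑ i, m i with hs
  have haf : ∀ i, a i ≠ ⊤ := fun i => measure_ne_top μ _
  have hbf : ∀ i, b i ≠ ⊤ := fun i => measure_ne_top μ' _
  -- sum of restrictions is the measure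
  have hrestr : ∀ ν : Measure X, ∑ i, ν.restrict (B i) = ν := by
    intro ν
    ext t ht
    rw [Measure.finset_sum_apply]
    simp_rw [Measure.restrict_apply ht]
    have hd2 : Pairwise (Function.onFun Disjoint fun i => t ∩ B i) := fun i j hij =>
      ((hdisj hij).mono (Set.inter_subset_right) (Set.inter_subset_right))
    rw [← tsum_fintype (L := SummationFilter.unconditional _), ← measure_iUnion hd2 (fun i => ht.inter (hmeas i)),
      ← Set.inter_iUnion, hcover, Set.inter_univ]
  have hsum : ∀ (ν : Measure X), ν Set.univ = 1 → ∑ i, ν (B i) = 1 := by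
    intro ν hν
    have := congrArg (fun ρ : Measure X => ρ Set.univ) (hrestr ν)
    simpa [Measure.finset_sum_apply, Measure.restrict_apply_univ, hν] using this
  have hsa : ∑ i, a i = 1 := hsum μ (measure_univ)
  have hsb : ∑ i, b i = 1 := hsum μ' (measure_univ)
  have hs_le : s ≤ 1 := by
    rw [← hsa]; exact Finset.sum_le_sum fun i _ => min_le_left _ _
  have hs_ne : s ≠ ⊤ := (hs_le.trans_lt ENNReal.one_lt_top).ne
  -- the dagger identity
  have hdag : ∀ (ν : Measure X) (w : Fin N → ℝ≥0∞), (∀ i, w i ≤ ν (B i)) →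
      (∑ i, (w i / ν (B i)) • ν.restrict (B i)) +
        (∑ i, (1 - w i / ν (B i)) • ν.restrict (B i)) = ν := by
    intro ν w hw
    rw [← Finset.sum_add_distrib]
    have : ∀ i, (w i / ν (B i)) • ν.restrict (B i) + (1 - w i / ν (B i)) • ν.restrict (B i)
        = ν.restrict (B i) := by
      intro i
      rw [← add_smul, add_tsub_cancel_of_le, one_smul]
      exact ENNReal.div_le_of_le_mul (by simpa using hw i)
    simp_rw [this]
    exact hrestr ν
  -- mass of the excess
  have hexc : ∀ (ν : Measure X) (w : Fin N → ℝ≥0∞), ν Set.univ = 1 → (∀ i, w i ≤ ν (B i)) →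
      (∑ i, (1 - w i / ν (B i)) • ν.restrict (B i)) Set.univ = 1 - ∑ i, w i := by
    intro ν w hν hw
    have hνf : ∀ t, ν t ≠ ⊤ := fun t =>
      ((measure_mono (Set.subset_univ t)).trans_lt (hν ▸ ENNReal.one_lt_top)).ne
    have hterm : ∀ i, (1 - w i / ν (B i)) * ν (B i) = ν (B i) - w i := by
      intro i
      rw [ENNReal.sub_mul (fun _ _ => hνf _), one_mul]
      rcases eq_or_ne (ν (B i)) 0 with h0 | h0
      · have hw0 : w i = 0 := le_antisymm (h0 ▸ hw i) (zero_le)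
        simp [h0, hw0]
      · rw [ENNReal.div_mul_cancel h0 (hνf _)]
    have : (∑ i, (1 - w i / ν (B i)) • ν.restrict (B i)) Set.univ
        = ∑ i, (ν (B i) - w i) := by
      rw [Measure.finset_sum_apply]
      simp_rw [Measure.smul_apply, Measure.restrict_apply_univ, smul_eq_mul, hterm]
    rw [this]
    have h1 : (∑ i, (ν (B i) - w i)) + ∑ i, w i = 1 := by
      rw [← Finset.sum_add_distrib]
      simp_rw [tsub_add_cancel_of_le (hw _)]
      exact hsum ν hν
    have hwne : (∑ i, w i) ≠ ⊤ := by
      refine ne_top_of_le_ne_top ENNReal.one_ne_top ?_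
      rw [← hsum ν hν]
      exact Finset.sum_le_sum fun i _ => hw i
    exact ENNReal.eq_sub_of_add_eq hwne h1
  -- the coupling
  set E : Measure X := ∑ i, (1 - m i / a i) • μ.restrict (B i) with hE
  set E' : Measure X := ∑ i, (1 - m i / b i) • μ'.restrict (B i) with hE'
  have hEuniv : E Set.univ = 1 - s := hexc μ m measure_univ (fun i => min_le_left _ _)
  have hE'univ : E' Set.univ = 1 - s := hexc μ' m measure_univ (fun i => min_le_right _ _)
  haveI : IsFiniteMeasure E := ⟨by rw [hEuniv]; exact lt_of_le_of_lt tsub_le_self ENNReal.one_lt_top⟩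
  haveI : IsFiniteMeasure E' := ⟨by rw [hE'univ]; exact lt_of_le_of_lt tsub_le_self ENNReal.one_lt_top⟩
  set π : Measure (X × X) :=
    (∑ i, (m i / (a i * b i)) • ((μ.restrict (B i)).prod (μ'.restrict (B i)))) +
      (1 - s)⁻¹ • (E.prod E') with hπ
  -- first marginal
  have hfst : π.map Prod.fst = μ := by
    rw [hπ, Measure.map_add _ _ measurable_fst, map_finsetSum_aux measurable_fst,
      Measure.map_smul]
    have h1 : ∀ i : Fin N, Measure.map Prod.fst
        ((m i / (a i * b i)) • ((μ.restrict (B i)).prod (μ'.restrict (B i))))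
        = (m i / a i) • μ.restrict (B i) := by
      intro i
      rw [Measure.map_smul, Measure.map_fst_prod, Measure.restrict_apply_univ, smul_smul]
      congr 1
      exact aux_coeff (min_le_right _ _) (hbf i)
    simp_rw [h1]
    rw [Measure.map_fst_prod, hE'univ, smul_smul]
    rcases lt_or_eq_of_le hs_le with hlt | heq
    · have : (1 - s)⁻¹ * (1 - s) = 1 :=
        ENNReal.inv_mul_cancel (tsub_pos_of_lt hlt).ne' (ne_top_of_le_ne_top ENNReal.one_ne_top tsub_le_self)
      rw [this, one_smul]
      exact hdag μ m (fun i => min_le_left _ _)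
    · have hE0 : E = 0 := by
        apply Measure.measure_univ_eq_zero.mp
        rw [hEuniv, ← heq, tsub_self]
      rw [hE0, smul_zero]
      have := hdag μ m (fun i => min_le_left _ _)
      rw [← hE, hE0, add_zero] at this
      rw [this, add_zero]
  -- second marginal
  have hsnd : π.map Prod.snd = μ' := by
    rw [hπ, Measure.map_add _ _ measurable_snd, map_finsetSum_aux measurable_snd,
      Measure.map_smul]
    have h1 : ∀ i : Fin N, Measure.map Prod.snd
        ((m i / (a i * b i)) • ((μ.restrict (B i)).prod (μ'.restrict (B i))))
        = (m i / b i) • μ'.restrict (B i) := by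
      intro i
      rw [Measure.map_smul, Measure.map_snd_prod, Measure.restrict_apply_univ, smul_smul]
      congr 1
      rw [mul_comm (a i) (b i)]
      exact aux_coeff (min_le_left _ _) (haf i)
    simp_rw [h1]
    rw [Measure.map_snd_prod, hEuniv, smul_smul]
    rcases lt_or_eq_of_le hs_le with hlt | heq
    · have : (1 - s)⁻¹ * (1 - s) = 1 :=
        ENNReal.inv_mul_cancel (tsub_pos_of_lt hlt).ne' (ne_top_of_le_ne_top ENNReal.one_ne_top tsub_le_self)
      rw [this, one_smul]
      exact hdag μ' m (fun i => min_le_right _ _)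
    · have hE0 : E' = 0 := by
        apply Measure.measure_univ_eq_zero.mp
        rw [hE'univ, ← heq, tsub_self]
      rw [hE0, smul_zero]
      have := hdag μ' m (fun i => min_le_right _ _)
      rw [← hE', hE0, add_zero] at this
      rw [this, add_zero]
  haveI hπP : IsProbabilityMeasure π := by
    constructor
    have : π Set.univ = (π.map Prod.fst) Set.univ := by
      rw [Measure.map_apply measurable_fst MeasurableSet.univ, Set.preimage_univ]
    rw [this, hfst, measure_univ]
  -- the cost
  have hdistmeas : AEStronglyMeasurable (fun p : X × X => dist p.1 p.2) π :=
    (continuous_fst.dist continuous_snd).aestronglyMeasurable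
  have hcost : (∫ p, dist p.1 p.2 ∂π) ≤ d + ↑N * η * D := by
    rw [integral_eq_lintegral_of_nonneg_ae (Filter.Eventually.of_forall fun p => dist_nonneg)
      hdistmeas]
    have hNηD : (0:ℝ) ≤ D * (N * η) := by positivity
    have hKle : (∫⁻ p, ENNReal.ofReal (dist p.1 p.2) ∂π) ≤ ENNReal.ofReal (d + D * (N * η)) := by
      rw [hπ, lintegral_add_measure, lintegral_finset_sum_measure]
      simp_rw [lintegral_smul_measure]
      -- diagonal terms
      have hKi : ∀ i : Fin N, (m i / (a i * b i)) *
          (∫⁻ p, ENNReal.ofReal (dist p.1 p.2) ∂((μ.restrict (B i)).prod (μ'.restrict (B i))))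
          ≤ ENNReal.ofReal d * m i := by
        intro i
        have hnull : ((μ.restrict (B i)).prod (μ'.restrict (B i))) ((B i ×ˢ B i)ᶜ) = 0 := by
          rw [Set.compl_prod_eq_union]
          refine measure_union_null ?_ ?_
          · rw [Measure.prod_prod, Measure.restrict_apply (hmeas i).compl,
              Set.compl_inter_self, measure_empty, zero_mul]
          · rw [Measure.prod_prod, Measure.restrict_apply (hmeas i).compl,
              Set.compl_inter_self, measure_empty, mul_zero]
        have hae : ∀ᵐ p ∂((μ.restrict (B i)).prod (μ'.restrict (B i))),
            ENNReal.ofReal (dist p.1 p.2) ≤ ENNReal.ofReal d := by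
          refine measure_mono_null ?_ hnull
          intro p hp
          simp only [Set.mem_compl_iff, Set.mem_setOf_eq, not_le] at hp ⊢
          intro hmem
          rcases hmem with ⟨h1, h2⟩
          exact absurd (ENNReal.ofReal_le_ofReal (hdiam i _ h1 _ h2)) (not_le.mpr hp)
        calc (m i / (a i * b i)) *
            (∫⁻ p, ENNReal.ofReal (dist p.1 p.2) ∂((μ.restrict (B i)).prod (μ'.restrict (B i))))
            ≤ (m i / (a i * b i)) * (ENNReal.ofReal d * (a i * b i)) := by
              refine mul_le_mul_right ?_ _
              calc ∫⁻ p, ENNReal.ofReal (dist p.1 p.2) ∂((μ.restrict (B i)).prod (μ'.restrict (B i)))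
                  ≤ ∫⁻ _, ENNReal.ofReal d ∂((μ.restrict (B i)).prod (μ'.restrict (B i))) :=
                    lintegral_mono_ae hae
                _ = ENNReal.ofReal d * (a i * b i) := by
                    rw [lintegral_const, ← Set.univ_prod_univ, Measure.prod_prod,
                      Measure.restrict_apply_univ, Measure.restrict_apply_univ]
          _ = ENNReal.ofReal d * (m i / (a i * b i) * (a i * b i)) := by ring
          _ ≤ ENNReal.ofReal d * m i := mul_le_mul_right (aux_div_mul_le _ _) _
      have hsumdiag : ∑ i, (m i / (a i * b i)) *
          (∫⁻ p, ENNReal.ofReal (dist p.1 p.2) ∂((μ.restrict (B i)).prod (μ'.restrict (B i))))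
          ≤ ENNReal.ofReal d := by
        calc _ ≤ ∑ i, ENNReal.ofReal d * m i := Finset.sum_le_sum fun i _ => hKi i
          _ = ENNReal.ofReal d * s := by rw [← Finset.mul_sum]
          _ ≤ ENNReal.ofReal d * 1 := mul_le_mul_right hs_le _
          _ = ENNReal.ofReal d := mul_one _
      -- excess term
      have hKE : (1 - s)⁻¹ * (∫⁻ p, ENNReal.ofReal (dist p.1 p.2) ∂(E.prod E'))
          ≤ ENNReal.ofReal (D * (N * η)) := by
        have h1 : (∫⁻ p, ENNReal.ofReal (dist p.1 p.2) ∂(E.prod E'))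
            ≤ ENNReal.ofReal D * ((1 - s) * (1 - s)) := by
          calc _ ≤ ∫⁻ _, ENNReal.ofReal D ∂(E.prod E') :=
                lintegral_mono fun p => ENNReal.ofReal_le_ofReal (hDbd _ _)
            _ = ENNReal.ofReal D * ((1 - s) * (1 - s)) := by
                rw [lintegral_const, ← Set.univ_prod_univ, Measure.prod_prod, hEuniv, hE'univ]
        have hinv : (1 - s)⁻¹ * (1 - s) ≤ 1 := by
          rcases eq_or_ne (1 - s) 0 with h0 | h0
          · simp [h0]
          · rw [ENNReal.inv_mul_cancel h0 (ne_top_of_le_ne_top ENNReal.one_ne_top tsub_le_self)]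
        have h2 : (1 : ℝ≥0∞) - s ≤ ↑N * ENNReal.ofReal η := by
          have hterm : ∀ i, a i - m i ≤ ENNReal.ofReal η := by
            intro i
            rcases le_total (a i) (b i) with hab | hab
            · rw [hm]; simp only [min_eq_left hab, tsub_self]; exact zero_le
            · rw [hm]; simp only [min_eq_right hab]
              rw [ENNReal.le_ofReal_iff_toReal_le ((ne_top_of_le_ne_top (haf i) tsub_le_self)) hη,
                ENNReal.toReal_sub_of_le hab (haf i)]
              exact le_trans (le_abs_self _) (hclose i)
          have hsub : (1:ℝ≥0∞) - s = ∑ i, (a i - m i) := by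
            refine (ENNReal.eq_sub_of_add_eq hs_ne ?_).symm
            rw [← Finset.sum_add_distrib]
            refine (Finset.sum_congr rfl fun i _ => tsub_add_cancel_of_le (min_le_left (a i) (b i))).trans ?_
            exact hsa
          rw [hsub]
          calc ∑ i, (a i - m i) ≤ ∑ _i : Fin N, ENNReal.ofReal η :=
                Finset.sum_le_sum fun i _ => hterm i
            _ = ↑N * ENNReal.ofReal η := by
                rw [Finset.sum_const, Finset.card_univ, Fintype.card_fin, nsmul_eq_mul]
        calc (1 - s)⁻¹ * (∫⁻ p, ENNReal.ofReal (dist p.1 p.2) ∂(E.prod E'))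
            ≤ (1 - s)⁻¹ * (ENNReal.ofReal D * ((1 - s) * (1 - s))) := mul_le_mul_right h1 _
          _ = ENNReal.ofReal D * ((1 - s)⁻¹ * (1 - s) * (1 - s)) := by ring
          _ ≤ ENNReal.ofReal D * (1 * (↑N * ENNReal.ofReal η)) := by
              refine mul_le_mul_right (mul_le_mul' hinv h2) _
          _ = ENNReal.ofReal (D * (N * η)) := by
              rw [one_mul, ← ENNReal.ofReal_natCast N, ← ENNReal.ofReal_mul (by positivity),
                ← ENNReal.ofReal_mul hD]
      calc _ ≤ ENNReal.ofReal d + ENNReal.ofReal (D * (N * η)) := add_le_add hsumdiag hKE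
        _ = ENNReal.ofReal (d + D * (N * η)) := (ENNReal.ofReal_add hd hNηD).symm
    calc (∫⁻ p, ENNReal.ofReal (dist p.1 p.2) ∂π).toReal ≤ d + D * (N * η) :=
          ENNReal.toReal_le_of_le_ofReal (by positivity) hKle
      _ = d + ↑N * η * D := by ring
  -- conclude
  refine le_trans (csInf_le ⟨0, ?_⟩ ⟨π, hπP, hfst, hsnd, rfl⟩) hcost
  rintro c ⟨ρ, -, -, -, rfl⟩
  exact integral_nonneg fun p => dist_nonneg

lemma coveringNumber_PX_le {X : Type*} [MetricSpace X] [MeasurableSpace X] [BorelSpace X]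
    [SecondCountableTopology X]
    {N : ℕ} (hN : 0 < N) {B : Fin N → Set X} (hmeas : ∀ i, MeasurableSet (B i))
    (hdisj : Pairwise (Function.onFun Disjoint B))
    (hcover : (⋃ i, B i) = Set.univ)
    {d : ℝ} (hd : 0 < d) (hdiam : ∀ i, ∀ x ∈ B i, ∀ y ∈ B i, dist x y ≤ d)
    {D : ℝ} (hD : 1 ≤ D) (hDbd : ∀ x y : X, dist x y ≤ D)
    {M : ℕ} (hM : (N : ℝ) * D / d ≤ M) :
    coveringNumber
      (fun μ ν : ProbabilityMeasure X => wasserstein1 (μ : Measure X) (ν : Measure X))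
      Set.univ (2 * d) ≤ ((M + 1) ^ N : ℕ) := by
  classical
  set η : ℝ := d / (N * D) with hη
  have hD0 : (0:ℝ) < D := lt_of_lt_of_le one_pos hD
  have hN0 : (0:ℝ) < (N:ℝ) := by exact_mod_cast hN
  have hη0 : 0 < η := by positivity
  set S : (Fin N → Fin (M + 1)) → Set (ProbabilityMeasure X) := fun w =>
    {μ : ProbabilityMeasure X | ∀ i,
      ((μ : Measure X) (B i)).toReal ∈ Set.Ico ((w i : ℝ) * η) (((w i : ℝ) + 1) * η)} with hS
  set C : Finset (Set (ProbabilityMeasure X)) := Finset.image S Finset.univ with hC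
  have hmemset : (C.card : ℕ∞) ∈ {n : ℕ∞ | ∃ C' : Finset (Set (ProbabilityMeasure X)),
      n = C'.card ∧ (∀ s ∈ C', ∀ x ∈ s, ∀ y ∈ s,
        wasserstein1 (x : Measure X) (y : Measure X) ≤ 2 * d) ∧
      Set.univ ⊆ ⋃ s ∈ C', s} := by
    refine ⟨C, rfl, ?_, ?_⟩
    · intro t ht μ hμ ν hν
      rw [hC] at ht
      obtain ⟨w, -, rfl⟩ := Finset.mem_image.mp ht
      have hclose : ∀ i, |((μ : Measure X) (B i)).toReal - ((ν : Measure X) (B i)).toReal| ≤ η := by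
        intro i
        have h1 := hμ i
        have h2 := hν i
        rw [Set.mem_Ico] at h1 h2
        rw [abs_sub_le_iff]
        constructor <;> nlinarith [h1.1, h1.2, h2.1, h2.2]
      have := w1_le_of_cells hmeas hdisj hcover hd.le hdiam (le_trans zero_le_one hD) hDbd
        (μ : Measure X) (ν : Measure X) hη0.le hclose
      calc wasserstein1 (μ : Measure X) (ν : Measure X) ≤ d + N * η * D := this
        _ = 2 * d := by
          rw [hη]; field_simp; ring
    · rintro μ -
      have hle1 : ∀ i, ((μ : Measure X) (B i)).toReal ≤ 1 := by
        intro i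
        have := measure_mono (Set.subset_univ (B i)) (μ := (μ : Measure X))
        have h2 : ((μ : Measure X) Set.univ).toReal = 1 := by simp
        rw [← h2]
        exact ENNReal.toReal_mono (measure_ne_top _ _) this
      have hbound : ∀ i, ⌊((μ : Measure X) (B i)).toReal / η⌋₊ < M + 1 := by
        intro i
        have h1 : ((μ : Measure X) (B i)).toReal / η ≤ (M:ℝ) := by
          have ha : ((μ : Measure X) (B i)).toReal / η ≤ 1 / η := by
            gcongr
            exact hle1 i
          have h2 : (1:ℝ)/η = N*D/d := by rw [hη, one_div_div]
          linarith [hM]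
        have h2 := Nat.floor_le_floor h1
        rw [Nat.floor_natCast] at h2
        exact Nat.lt_succ_of_le h2
      refine Set.mem_iUnion.mpr ⟨S (fun i => ⟨⌊((μ : Measure X) (B i)).toReal / η⌋₊, hbound i⟩), ?_⟩
      refine Set.mem_iUnion.mpr ⟨Finset.mem_image.mpr ⟨_, Finset.mem_univ _, rfl⟩, ?_⟩
      intro i
      simp only [Set.mem_Ico]
      constructor
      · calc (↑⌊((μ : Measure X) (B i)).toReal / η⌋₊ : ℝ) * η
            ≤ ((μ : Measure X) (B i)).toReal / η * η :=
              mul_le_mul_of_nonneg_right (Nat.floor_le (by positivity)) hη0.le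
        _ = ((μ : Measure X) (B i)).toReal := div_mul_cancel₀ _ hη0.ne'
      · have := Nat.lt_floor_add_one (((μ : Measure X) (B i)).toReal / η)
        calc ((μ : Measure X) (B i)).toReal
            = ((μ : Measure X) (B i)).toReal / η * η := (div_mul_cancel₀ _ hη0.ne').symm
          _ < (↑⌊((μ : Measure X) (B i)).toReal / η⌋₊ + 1) * η :=
              mul_lt_mul_of_pos_right this hη0
  calc coveringNumber _ Set.univ (2*d) ≤ (C.card : ℕ∞) := sInf_le hmemset
    _ ≤ ((M + 1) ^ N : ℕ) := by
      have h1 : C.card ≤ (M + 1) ^ N := by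
        calc C.card ≤ (Finset.univ : Finset (Fin N → Fin (M+1))).card := Finset.card_image_le
          _ = (M + 1) ^ N := by simp
      exact_mod_cast h1

lemma exists_min_cover {α : Type*} (ρ : α → α → ℝ) (Y : Set α) (δ : ℝ)
    (h : coveringNumber ρ Y δ ≠ ⊤) :
    ∃ C : Finset (Set α), (C.card : ℕ∞) = coveringNumber ρ Y δ ∧
      (∀ s ∈ C, ∀ x ∈ s, ∀ y ∈ s, ρ x y ≤ δ) ∧ Y ⊆ ⋃ s ∈ C, s := by
  classical
  set S : Set ℕ∞ := {n : ℕ∞ | ∃ C : Finset (Set α), n = C.card ∧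
    (∀ s ∈ C, ∀ x ∈ s, ∀ y ∈ s, ρ x y ≤ δ) ∧ Y ⊆ ⋃ s ∈ C, s} with hSdef
  have hcn : coveringNumber ρ Y δ = sInf S := rfl
  set T : Set ℕ := {n : ℕ | (n : ℕ∞) ∈ S} with hT
  have hTne : T.Nonempty := by
    by_contra hemp
    refine h ?_
    rw [hcn, sInf_eq_top]
    intro n hn
    by_contra hn'
    lift n to ℕ using hn'
    exact hemp ⟨n, hn⟩
  have hmem : ((sInf T : ℕ) : ℕ∞) ∈ S := Nat.sInf_mem hTne
  have heq : coveringNumber ρ Y δ = ((sInf T : ℕ) : ℕ∞) := by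
    refine le_antisymm (hcn ▸ sInf_le hmem) ?_
    rw [hcn]
    refine le_sInf fun x hx => ?_
    rcases eq_or_ne x ⊤ with rfl | hx'
    · exact le_top
    · lift x to ℕ using hx'
      exact_mod_cast Nat.sInf_le (show x ∈ T from by exact_mod_cast hx)
  obtain ⟨C, hcard, hdiam, hcov⟩ := hmem
  exact ⟨C, by rw [heq, hcard], hdiam, hcov⟩

lemma disjointify {X : Type*} [MetricSpace X] [MeasurableSpace X] [BorelSpace X]
    (C : Finset (Set X)) {δ : ℝ} (hδ : 0 ≤ δ)
    (hdiam : ∀ s ∈ C, ∀ x ∈ s, ∀ y ∈ s, dist x y ≤ δ)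
    (hcov : Set.univ ⊆ ⋃ s ∈ C, s) :
    ∃ B : Fin C.card → Set X, (∀ i, MeasurableSet (B i)) ∧
      Pairwise (Function.onFun Disjoint B) ∧ (⋃ i, B i) = Set.univ ∧
      ∀ i, ∀ x ∈ B i, ∀ y ∈ B i, dist x y ≤ δ := by
  classical
  set e := C.equivFin with he
  set t : Fin C.card → Set X := fun i => closure ((e.symm i : Set X)) with ht
  have htdiam : ∀ i, ∀ x ∈ t i, ∀ y ∈ t i, dist x y ≤ δ := by
    intro i x hx y hy
    have hsmem := (e.symm i).2
    have hsb : Bornology.IsBounded ((e.symm i : Set X)) :=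
      Metric.isBounded_iff.mpr ⟨δ, fun x hx y hy => hdiam _ hsmem x hx y hy⟩
    calc dist x y ≤ Metric.diam (closure ((e.symm i : Set X))) :=
          Metric.dist_le_diam_of_mem hsb.closure hx hy
      _ = Metric.diam ((e.symm i : Set X)) := Metric.diam_closure _
      _ ≤ δ := Metric.diam_le_of_forall_dist_le hδ (hdiam _ hsmem)
  refine ⟨fun i => t i \ ⋃ j, ⋃ (_ : j < i), t j, ?_, ?_, ?_, ?_⟩
  · intro i
    exact (isClosed_closure.measurableSet).diff
      (MeasurableSet.iUnion fun j => MeasurableSet.iUnion fun _ => isClosed_closure.measurableSet)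
  · intro i j hij
    rcases lt_or_gt_of_ne hij with hlt | hlt
    · refine Set.disjoint_left.mpr fun x hx hx' => ?_
      exact hx'.2 (Set.mem_iUnion.mpr ⟨i, Set.mem_iUnion.mpr ⟨hlt, hx.1⟩⟩)
    · refine Set.disjoint_left.mpr fun x hx hx' => ?_
      exact hx.2 (Set.mem_iUnion.mpr ⟨j, Set.mem_iUnion.mpr ⟨hlt, hx'.1⟩⟩)
  · refine Set.eq_univ_of_forall fun x => ?_
    have : ∃ i, x ∈ t i := by
      obtain ⟨s, hs⟩ := Set.mem_iUnion.mp (hcov (Set.mem_univ x))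
      obtain ⟨hsC, hxs⟩ := Set.mem_iUnion.mp hs
      exact ⟨e ⟨s, hsC⟩, by rw [ht]; simp only [Equiv.symm_apply_apply]; exact subset_closure hxs⟩
    obtain ⟨i, hi, hmin⟩ := (wellFounded_lt (α := Fin C.card)).has_min {i | x ∈ t i} this
    refine Set.mem_iUnion.mpr ⟨i, hi, ?_⟩
    intro hx'
    obtain ⟨j, hj⟩ := Set.mem_iUnion.mp hx'
    obtain ⟨hji, hxj⟩ := Set.mem_iUnion.mp hj
    exact hmin j hxj hji
  · intro i x hx y hy
    exact htdiam i x hx.1 y hy.1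

lemma one_le_coveringNumber {α : Type*} (ρ : α → α → ℝ) {Y : Set α} (hY : Y.Nonempty) (δ : ℝ) :
    1 ≤ coveringNumber ρ Y δ := by
  refine le_sInf fun x hx => ?_
  obtain ⟨C, rfl, -, hcov⟩ := hx
  obtain ⟨y, hy⟩ := hY
  obtain ⟨s, hs⟩ := Set.mem_iUnion.mp (hcov hy)
  obtain ⟨hsC, -⟩ := Set.mem_iUnion.mp hs
  have : 1 ≤ C.card := Finset.card_pos.mpr ⟨s, hsC⟩
  exact_mod_cast this

lemma tendsto_half : Filter.Tendsto (fun δ : ℝ => δ / 2) (nhdsWithin 0 (Set.Ioi 0))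
    (nhdsWithin 0 (Set.Ioi 0)) := by
  refine tendsto_nhdsWithin_of_tendsto_nhds_of_eventually_within _ ?_ ?_
  · have : Filter.Tendsto (fun δ : ℝ => δ / 2) (nhds 0) (nhds (0 / 2)) :=
      (continuous_id.div_const 2).tendsto 0
    rw [zero_div] at this
    exact this.mono_left nhdsWithin_le_nhds
  · filter_upwards [self_mem_nhdsWithin] with δ (hδ : δ ∈ Set.Ioi 0)
    exact div_pos (Set.mem_Ioi.mp hδ) two_pos

lemma tendsto_loginv : Filter.Tendsto (fun δ : ℝ => Real.log (1 / δ))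
    (nhdsWithin 0 (Set.Ioi 0)) atTop := by
  have h1 : Filter.Tendsto (fun δ : ℝ => Real.log δ) (nhdsWithin 0 (Set.Ioi 0)) atBot :=
    Real.tendsto_log_nhdsGT_zero
  have h2 : Filter.Tendsto (fun δ : ℝ => -Real.log δ) (nhdsWithin 0 (Set.Ioi 0)) atTop :=
    tendsto_neg_atBot_atTop.comp h1
  refine h2.congr fun δ => ?_
  rw [one_div, Real.log_inv]

lemma tail_tendsto (A B : ℝ) (hB : 0 < B) :
    Filter.Tendsto (fun t : ℝ => Real.log (A + B * t) / t) atTop (nhds 0) := by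
  have hcomp : Filter.Tendsto (fun t : ℝ => A + B * t) atTop atTop :=
    tendsto_atTop_add_const_left _ A (Filter.Tendsto.const_mul_atTop hB tendsto_id)
  have h1 : (fun t : ℝ => Real.log (A + B * t)) =o[atTop] (fun t => A + B * t) :=
    Real.isLittleO_log_id_atTop.comp_tendsto hcomp
  have h2 : (fun t : ℝ => A + B * t) =O[atTop] (fun t : ℝ => t) := by
    refine Asymptotics.IsBigO.of_bound (|A| + B) ?_
    filter_upwards [Filter.eventually_ge_atTop (1 : ℝ)] with t ht
    have h3 : |A + B * t| ≤ |A| + B * t := by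
      have h5 := abs_add_le A (B * t)
      rwa [abs_of_nonneg (mul_nonneg hB.le (by linarith))] at h5
    have h4 : ‖t‖ = t := by rw [Real.norm_eq_abs, abs_of_nonneg (by linarith)]
    rw [Real.norm_eq_abs, h4]
    nlinarith [abs_nonneg A]
  exact (h1.trans_isBigO h2).tendsto_div_nhds_zero

set_option maxHeartbeats 2000000 in
/-- Upper bound: if `(X,d)` has finite diameter and covering dimension `κ < ∞`, then
the log-covering dimension of the space of probability measures on `X` with the
Wasserstein-1 metric is at most `κ`. -/
theorem stmt_13 {X : Type*} [MetricSpace X] [MeasurableSpace X] [BorelSpace X]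
    (hbdd : ∃ D : ℝ, ∀ x y : X, dist x y ≤ D) (κ : ℝ)
    (hκ : covDim (fun x y : X => dist x y) Set.univ = (κ : EReal)) :
    logCovDim
        (fun μ ν : ProbabilityMeasure X => wasserstein1 (μ : Measure X) (ν : Measure X))
        Set.univ ≤ (κ : EReal) := by
  classical
  obtain ⟨D₀, hD₀⟩ := hbdd
  set D : ℝ := max D₀ 1 with hDdef
  have hD : 1 ≤ D := le_max_right _ _
  have hD0 : (0:ℝ) < D := lt_of_lt_of_le one_pos hD
  have hDbd : ∀ x y : X, dist x y ≤ D := fun x y => (hD₀ x y).trans (le_max_left _ _)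
  set ρX : X → X → ℝ := fun x y => dist x y with hρX
  set ρP : ProbabilityMeasure X → ProbabilityMeasure X → ℝ :=
    fun μ ν => wasserstein1 (μ : Measure X) (ν : Measure X) with hρP
  rcases isEmpty_or_nonempty X with hempty | hne
  · -- empty case
    have hPempty : IsEmpty (ProbabilityMeasure X) := by
      refine ⟨fun μ => ?_⟩
      have h1 : (μ : Measure X) Set.univ = 1 := measure_univ
      rw [Set.univ_eq_empty_iff.mpr hempty, measure_empty] at h1
      exact zero_ne_one h1
    have hcn0 : ∀ (α : Type _) [IsEmpty α] (ρ : α → α → ℝ) (δ : ℝ),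
        coveringNumber ρ Set.univ δ = 0 := by
      intro α hα ρ δ
      refine le_antisymm (sInf_le ⟨∅, by simp, by simp, by
        simp [Set.univ_eq_empty_iff.mpr hα]⟩) (zero_le)
    have hlog0 : logCovDim ρP Set.univ = (0 : EReal) := by
      rw [logCovDim]
      have : (fun δ : ℝ => if coveringNumber ρP Set.univ δ = ⊤ then (⊤ : EReal)
          else ((Real.log (Real.log (((coveringNumber ρP Set.univ δ).toNat : ℝ))) /
            Real.log (1 / δ) : ℝ) : EReal)) = fun _ => ((0:ℝ) : EReal) := by
        funext δ
        rw [hcn0 _ ρP δ]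
        simp
      rw [this, limsup_const]
      rfl
    have hκ0 : (κ : EReal) = (0 : EReal) := by
      rw [← hκ, covDim]
      have : (fun δ : ℝ => if coveringNumber ρX Set.univ δ = ⊤ then (⊤ : EReal)
          else ((Real.log (((coveringNumber ρX Set.univ δ).toNat : ℝ)) /
            Real.log (1 / δ) : ℝ) : EReal)) = fun _ => ((0:ℝ) : EReal) := by
        funext δ
        rw [hcn0 _ ρX δ]
        simp
      rw [this, limsup_const]
      rfl
    rw [hlog0, hκ0]
  · -- nonempty case
    rw [covDim] at hκ
    -- eventually the covering number of X is finite, uniformly on an interval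
    have hev1 : ∀ᶠ δ in nhdsWithin (0:ℝ) (Set.Ioi 0),
        coveringNumber ρX Set.univ δ ≠ ⊤ := by
      have hlt : limsup (fun δ : ℝ => if coveringNumber ρX Set.univ δ = ⊤ then (⊤ : EReal)
          else ((Real.log (((coveringNumber ρX Set.univ δ).toNat : ℝ)) /
            Real.log (1 / δ) : ℝ) : EReal)) (nhdsWithin 0 (Set.Ioi 0))
          < ((κ + 1 : ℝ) : EReal) := by
        rw [hκ]
        exact_mod_cast EReal.coe_lt_coe_iff.mpr (by linarith)
      filter_upwards [eventually_lt_of_limsup_lt hlt] with δ hδ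
      intro htop
      rw [htop, if_pos rfl] at hδ
      exact not_top_lt hδ
    obtain ⟨δ1, hδ1pos, hδ1⟩ : ∃ δ1 > 0, ∀ δ : ℝ, 0 < δ → δ < δ1 →
        coveringNumber ρX Set.univ δ ≠ ⊤ := by
      rw [eventually_nhdsWithin_iff, Metric.eventually_nhds_iff] at hev1
      obtain ⟨δ1, hδ1pos, h⟩ := hev1
      refine ⟨δ1, hδ1pos, fun δ hδ0 hδδ1 => ?_⟩
      exact h (by rw [Real.dist_eq, sub_zero, abs_of_pos hδ0]; exact hδδ1) hδ0
    -- total boundedness, hence second countability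
    have htb : TotallyBounded (Set.univ : Set X) := by
      rw [Metric.totallyBounded_iff]
      intro ε hε
      set δ : ℝ := min (ε / 2) (δ1 / 2) with hδdef
      have hδ0 : 0 < δ := lt_min (by linarith) (by linarith)
      have hδlt : δ < δ1 := lt_of_le_of_lt (min_le_right _ _) (by linarith)
      obtain ⟨C, hcard, hdiam, hcov⟩ := exists_min_cover ρX Set.univ δ (hδ1 δ hδ0 hδlt)
      set pt : Set X → X := fun s => if h : s.Nonempty then h.choose else hne.some with hpt
      refine ⟨↑(C.image pt), (C.image pt).finite_toSet, fun x _ => ?_⟩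
      obtain ⟨s, hs⟩ := Set.mem_iUnion.mp (hcov (Set.mem_univ x))
      obtain ⟨hsC, hxs⟩ := Set.mem_iUnion.mp hs
      have hsne : s.Nonempty := ⟨x, hxs⟩
      have hpts : pt s ∈ s := by
        rw [hpt]
        simp only [dif_pos hsne]
        exact hsne.choose_spec
      refine Set.mem_iUnion.mpr ⟨pt s, ?_⟩
      refine Set.mem_iUnion.mpr ⟨Finset.mem_coe.mpr (Finset.mem_image_of_mem pt hsC), ?_⟩
      rw [Metric.mem_ball]
      calc dist x (pt s) ≤ δ := hdiam s hsC x hxs (pt s) hpts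
        _ < ε := lt_of_le_of_lt (min_le_left _ _) (by linarith)
    haveI : TopologicalSpace.SeparableSpace X :=
      TopologicalSpace.isSeparable_univ_iff.mp htb.isSeparable
    haveI : SecondCountableTopology X := UniformSpace.secondCountable_of_separable X
    -- κ is nonnegative
    have hcnX1 : ∀ δ : ℝ, 1 ≤ coveringNumber ρX Set.univ δ :=
      fun δ => one_le_coveringNumber ρX (Set.univ_nonempty) δ
    have hκ0 : (0:ℝ) ≤ κ := by
      have hfreq : ∀ᶠ δ in nhdsWithin (0:ℝ) (Set.Ioi 0),
          (((0:ℝ)) : EReal) ≤ (if coveringNumber ρX Set.univ δ = ⊤ then (⊤ : EReal)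
            else ((Real.log (((coveringNumber ρX Set.univ δ).toNat : ℝ)) /
              Real.log (1 / δ) : ℝ) : EReal)) := by
        filter_upwards [hev1, eventually_mem_nhdsWithin,
          eventually_nhdsWithin_of_eventually_nhds (gt_mem_nhds (by norm_num : (0:ℝ) < 1))]
          with δ hne_top (hδ0 : δ ∈ Set.Ioi 0) hδ1'
        rw [if_neg hne_top, EReal.coe_le_coe_iff]
        have hn1 : 1 ≤ (coveringNumber ρX Set.univ δ).toNat := by
          have := ENat.toNat_le_toNat (hcnX1 δ) hne_top
          simpa using this
        refine div_nonneg (Real.log_nonneg (by exact_mod_cast hn1)) ?_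
        exact (Real.log_nonneg (le_of_lt (one_lt_one_div hδ0 hδ1'))).trans (le_refl _)
      have h0le : ((0:ℝ) : EReal) ≤ (κ : EReal) := by
        rw [← hκ]
        exact le_limsup_of_frequently_le hfreq.frequently
      exact_mod_cast h0le
    -- main bound
    suffices hmain : ∀ ε : ℝ, 0 < ε → logCovDim ρP Set.univ ≤ ((κ + ε : ℝ) : EReal) by
      refine le_of_not_gt fun hlt => ?_
      obtain ⟨c, hc1, hc2⟩ := EReal.exists_between_coe_real hlt
      have hcκ : κ < c := by exact_mod_cast hc1
      have := hmain (c - κ) (by linarith)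
      rw [show κ + (c - κ) = c by ring] at this
      exact absurd (lt_of_le_of_lt this hc2) (lt_irrefl _)
    intro ε hε
    set ε' : ℝ := ε / 3 with hε'def
    have hε' : 0 < ε' := by positivity
    set A : ℝ := Real.log 4 + Real.log D + (κ + ε') * Real.log 2 with hAdef
    set Bc : ℝ := κ + ε' + 1 with hBdef
    have hBc : 0 < Bc := by linarith
    -- eventual bound on the X covering number at δ/2
    have hevX : ∀ᶠ δ in nhdsWithin (0:ℝ) (Set.Ioi 0),
        (if coveringNumber ρX Set.univ (δ/2) = ⊤ then (⊤ : EReal)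
          else ((Real.log (((coveringNumber ρX Set.univ (δ/2)).toNat : ℝ)) /
            Real.log (1 / (δ/2)) : ℝ) : EReal)) < ((κ + ε' : ℝ) : EReal) := by
      have hlt : limsup (fun δ : ℝ => if coveringNumber ρX Set.univ δ = ⊤ then (⊤ : EReal)
          else ((Real.log (((coveringNumber ρX Set.univ δ).toNat : ℝ)) /
            Real.log (1 / δ) : ℝ) : EReal)) (nhdsWithin 0 (Set.Ioi 0))
          < ((κ + ε' : ℝ) : EReal) := by
        rw [hκ]
        exact_mod_cast EReal.coe_lt_coe_iff.mpr (by linarith)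
      exact tendsto_half.eventually (eventually_lt_of_limsup_lt hlt)
    -- tail bounds
    have hevT1 : ∀ᶠ δ in nhdsWithin (0:ℝ) (Set.Ioi 0), 1 ≤ Real.log (1/δ) :=
      tendsto_loginv.eventually (Filter.eventually_ge_atTop 1)
    have hevT2 : ∀ᶠ δ in nhdsWithin (0:ℝ) (Set.Ioi 0),
        (κ + ε') * Real.log 2 / Real.log (1/δ) < ε' := by
      have h1 : Filter.Tendsto (fun t : ℝ => (κ + ε') * Real.log 2 / t) atTop (nhds 0) :=
        tendsto_const_nhds.div_atTop tendsto_id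
      exact tendsto_loginv.eventually (h1.eventually_lt_const hε')
    have hevT3 : ∀ᶠ δ in nhdsWithin (0:ℝ) (Set.Ioi 0),
        Real.log (A + Bc * Real.log (1/δ)) / Real.log (1/δ) < ε' :=
      tendsto_loginv.eventually ((tail_tendsto A Bc hBc).eventually_lt_const hε')
    -- final eventual bound
    have hev : ∀ᶠ δ in nhdsWithin (0:ℝ) (Set.Ioi 0),
        (if coveringNumber ρP Set.univ δ = ⊤ then (⊤ : EReal)
          else ((Real.log (Real.log (((coveringNumber ρP Set.univ δ).toNat : ℝ))) /
            Real.log (1 / δ) : ℝ) : EReal)) ≤ ((κ + ε : ℝ) : EReal) := by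
      filter_upwards [hevX, hevT1, hevT2, hevT3, eventually_mem_nhdsWithin,
        eventually_nhdsWithin_of_eventually_nhds (gt_mem_nhds (by norm_num : (0:ℝ) < 1/2))]
        with δ hX hT1 hT2 hT3 hδ0' hδhalf
      have hδ0 : (0:ℝ) < δ := hδ0'
      set t : ℝ := Real.log (1/δ) with htdef
      have ht0 : 0 < t := lt_of_lt_of_le one_pos hT1
      -- extract data about the covering number of X at δ/2
      have hXne_top : coveringNumber ρX Set.univ (δ/2) ≠ ⊤ := by
        intro htop
        rw [htop, if_pos rfl] at hX
        exact not_top_lt hX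
      set n : ℕ := (coveringNumber ρX Set.univ (δ/2)).toNat with hndef
      have hn1 : 1 ≤ n := by
        have := ENat.toNat_le_toNat (hcnX1 (δ/2)) hXne_top
        simpa using this
      have hlog2δ : (0:ℝ) < Real.log (2/δ) :=
        Real.log_pos (by rw [lt_div_iff₀ hδ0]; linarith)
      have hlogn : Real.log n < (κ + ε') * Real.log (2/δ) := by
        rw [if_neg hXne_top, EReal.coe_lt_coe_iff] at hX
        have heq : 1 / (δ/2) = 2/δ := by field_simp
        rw [heq] at hX
        calc Real.log n = Real.log n / Real.log (2/δ) * Real.log (2/δ) := by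
              field_simp
          _ < (κ + ε') * Real.log (2/δ) := by
              exact mul_lt_mul_of_pos_right hX hlog2δ
      -- build the cover of X and then of P_X
      obtain ⟨C, hcard, hdiamC, hcovC⟩ := exists_min_cover ρX Set.univ (δ/2) hXne_top
      have hcardn : C.card = n := by
        have := congrArg ENat.toNat hcard
        simpa using this
      obtain ⟨B, hmeasB, hdisjB, hcovB, hdiamB⟩ :=
        disjointify C (by linarith : (0:ℝ) ≤ δ/2) hdiamC hcovC
      have hN0 : 0 < C.card := by rw [hcardn]; exact hn1
      set M : ℕ := ⌈(C.card : ℝ) * D / (δ/2)⌉₊ with hMdef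
      have hM : (C.card : ℝ) * D / (δ/2) ≤ M := Nat.le_ceil _
      have hcnP := coveringNumber_PX_le hN0 hmeasB hdisjB hcovB
        (by linarith : (0:ℝ) < δ/2) hdiamB hD hDbd hM
      rw [show 2 * (δ/2) = δ by ring] at hcnP
      have hcnPne : coveringNumber ρP Set.univ δ ≠ ⊤ :=
        ne_top_of_le_ne_top (WithTop.natCast_ne_top _) hcnP
      set m : ℕ := (coveringNumber ρP Set.univ δ).toNat with hmdef
      have hmle : m ≤ (M+1)^C.card := by
        have := ENat.toNat_le_toNat hcnP (WithTop.natCast_ne_top _)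
        rwa [ENat.toNat_natCast] at this
      -- numeric estimate
      rw [if_neg hcnPne, EReal.coe_le_coe_iff]
      rcases le_or_gt (Real.log (Real.log (m:ℝ))) 0 with hneg | hpos
      · calc Real.log (Real.log (m:ℝ)) / t ≤ 0 :=
            div_nonpos_of_nonpos_of_nonneg hneg ht0.le
          _ ≤ κ + ε := by linarith
      · -- positivity facts
        have hlogm_nonneg : 0 ≤ Real.log (m:ℝ) := by
          rcases Nat.eq_zero_or_pos m with h0 | h0
          · rw [h0]; simp
          · exact Real.log_nonneg (by exact_mod_cast h0)
        have hlogm1 : 1 < Real.log (m:ℝ) := by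
          by_contra h
          push_neg at h
          exact absurd (Real.log_nonpos hlogm_nonneg h) (not_le.mpr hpos)
        have hm1 : (1:ℝ) < (m:ℝ) := by
          by_contra h
          push_neg at h
          exact absurd (Real.log_nonpos (Nat.cast_nonneg m) h) (by linarith)
        have hM1 : 1 ≤ M := by
          rw [hMdef]
          refine Nat.one_le_ceil_iff.mpr ?_
          positivity
        have hlogM1 : 0 < Real.log ((M:ℝ)+1) :=
          Real.log_pos (by exact_mod_cast Nat.lt_succ_of_le hM1)
        -- log m ≤ N log (M+1)
        have hL1 : Real.log (m:ℝ) ≤ (C.card : ℝ) * Real.log ((M:ℝ)+1) := by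
          calc Real.log (m:ℝ) ≤ Real.log (((M+1)^C.card : ℕ) : ℝ) :=
                Real.log_le_log (by linarith) (by exact_mod_cast hmle)
            _ = (C.card : ℝ) * Real.log ((M:ℝ)+1) := by
                push_cast
                rw [Real.log_pow]
        -- M+1 ≤ 4 N D / δ
        have hND : (1:ℝ) ≤ (C.card : ℝ) * D := by
          have : (1:ℝ) ≤ (C.card : ℝ) := by exact_mod_cast hN0
          nlinarith
        have hL2 : ((M:ℝ)+1) ≤ 4 * (C.card : ℝ) * D / δ := by
          have h1 : ((M:ℝ)) < (C.card : ℝ) * D / (δ/2) + 1 := by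
            rw [hMdef]
            exact Nat.ceil_lt_add_one (by positivity)
          have h2 : (C.card : ℝ) * D / (δ/2) = 2 * ((C.card : ℝ) * D) / δ := by
            field_simp
          have h3 : (2:ℝ) ≤ 2 * ((C.card : ℝ) * D) / δ := by
            rw [le_div_iff₀ hδ0]
            nlinarith
          calc ((M:ℝ)+1) ≤ (C.card : ℝ) * D / (δ/2) + 2 := by linarith
            _ = 2 * ((C.card : ℝ) * D) / δ + 2 := by rw [h2]
            _ ≤ 2 * ((C.card : ℝ) * D) / δ + 2 * ((C.card : ℝ) * D) / δ := by linarith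
            _ = 4 * (C.card : ℝ) * D / δ := by ring
        -- log(M+1) ≤ A + Bc * t
        have hlog2δ_t : Real.log (2/δ) = Real.log 2 + t := by
          rw [htdef, div_eq_mul_one_div 2 δ, Real.log_mul two_ne_zero (by positivity)]
        have hlogN : Real.log (C.card : ℝ) ≤ (κ + ε') * (Real.log 2 + t) := by
          rw [← hlog2δ_t, hcardn]
          exact hlogn.le
        have hL3 : Real.log ((M:ℝ)+1) ≤ A + Bc * t := by
          have h1 : Real.log ((M:ℝ)+1) ≤ Real.log (4 * (C.card : ℝ) * D / δ) :=
            Real.log_le_log (by positivity) hL2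
          have h2 : Real.log (4 * (C.card : ℝ) * D / δ)
              = Real.log 4 + Real.log (C.card : ℝ) + Real.log D + t := by
            rw [htdef, show (4 : ℝ) * (C.card : ℝ) * D / δ
                = 4 * (C.card : ℝ) * D * (1/δ) by ring,
              Real.log_mul (by positivity) (by positivity),
              Real.log_mul (by positivity) (by positivity),
              Real.log_mul (by norm_num) (by positivity)]
          have hlog2 : Real.log 2 ≤ t := by
            have := Real.log_le_sub_one_of_pos (two_pos (α := ℝ))
            linarith
          have h4 := h1.trans_eq h2
          have hlogN2 : Real.log (C.card : ℝ) ≤ (κ + ε') * Real.log 2 + (κ + ε') * t := by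
            nlinarith [hlogN]
          rw [hAdef, hBdef]
          linarith [h4, hlogN2]
        -- conclude
        have hL4 : Real.log (Real.log (m:ℝ))
            ≤ (κ + ε') * (Real.log 2 + t) + Real.log (A + Bc * t) := by
          calc Real.log (Real.log (m:ℝ))
              ≤ Real.log ((C.card : ℝ) * Real.log ((M:ℝ)+1)) :=
                Real.log_le_log (by linarith) hL1
            _ = Real.log (C.card : ℝ) + Real.log (Real.log ((M:ℝ)+1)) := by
                rw [Real.log_mul (by positivity) hlogM1.ne']
            _ ≤ (κ + ε') * (Real.log 2 + t) + Real.log (A + Bc * t) := by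
                have := Real.log_le_log hlogM1 hL3
                linarith [hlogN]
        rw [div_le_iff₀ ht0]
        have hT2' : (κ + ε') * Real.log 2 ≤ ε' * t := by
          have := (div_lt_iff₀ ht0).mp hT2
          linarith
        have hT3' : Real.log (A + Bc * t) ≤ ε' * t := by
          have := (div_lt_iff₀ ht0).mp hT3
          linarith
        calc Real.log (Real.log (m:ℝ))
            ≤ (κ + ε') * (Real.log 2 + t) + Real.log (A + Bc * t) := hL4
          _ = (κ + ε') * Real.log 2 + (κ + ε') * t + Real.log (A + Bc * t) := by ring
          _ ≤ ε' * t + (κ + ε') * t + ε' * t := by linarith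
          _ = (κ + ε) * t := by rw [hε'def]; ring
    rw [logCovDim]
    exact Filter.limsup_le_of_le (h := hev)
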